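/- Let n ≥ 2, 1 ≤ r < n, C = r·(binom(n-1,r-1))⁻¹, and F(s,y) = C·√(1 - y^(2/r))·s^(r-1) - (n-r)·y/s on (0,∞)×[-1,1]. If τ : [s₀, ∞) → [-1,1] solves τ' = F(s,τ) and has a critical point s* > s₀ with τ(s*) > 0 and τ(s*) < 1, then τ''(s*) > 0; in particular every interior critical point of a positive solution is a strict local minimum. -/

import Mathlib

open Real Set

/-- At an interior critical point s* with 0 < τ(s*) < 1, a solution of the Euclidean
rotational translator ODE satisfies τ''(s*) > 0: every such critical point is a strict
local minimum. -/
theorem tau_second_deriv_pos_at_critical (n r : ℕ) (hn : 2 ≤ n) (hr1 : 1 ≤ r) (hr2 : r < n)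
    (C : ℝ) (hC : C = (r : ℝ) * ((n - 1).choose (r - 1) : ℝ)⁻¹)
    (F : ℝ → ℝ → ℝ)
    (hF : ∀ s y, F s y = C * Real.sqrt (1 - y ^ ((2 : ℝ) / r)) * s ^ (r - 1)
      - ((n : ℝ) - r) * y / s)
    (s₀ : ℝ) (hs₀ : 0 < s₀) (τ : ℝ → ℝ)
    (hmem : ∀ s ∈ Ici s₀, τ s ∈ Icc (-1 : ℝ) 1)
    (hode : ∀ s ∈ Ici s₀, HasDerivAt τ (F s (τ s)) s)
    (sstar : ℝ) (hstar : s₀ < sstar)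
    (hcrit : deriv τ sstar = 0)
    (hpos : 0 < τ sstar) (hlt : τ sstar < 1) :
    0 < deriv (deriv τ) sstar := by
  have hsstar : (0:ℝ) < sstar := hs₀.trans hstar
  have hsne : sstar ≠ 0 := hsstar.ne'
  set y := τ sstar with hy
  -- τ has derivative 0 at sstar
  have hτ := hode sstar (le_of_lt hstar)
  have hF0 : F sstar y = 0 := by rw [← hτ.deriv]; exact hcrit
  have h0 : HasDerivAt τ 0 sstar := hF0 ▸ hτ
  -- positivity facts
  have hrpos : (0:ℝ) < (2:ℝ) / r := by positivity
  have ha : y ^ ((2:ℝ)/r) < 1 := Real.rpow_lt_one hpos.le hlt hrpos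
  have hapos : (0:ℝ) < 1 - y ^ ((2:ℝ)/r) := by linarith
  have hCpos : 0 < C := by
    rw [hC]
    have : 0 < (n-1).choose (r-1) := Nat.choose_pos (by omega)
    have h1 : (0:ℝ) < ((n-1).choose (r-1) : ℝ) := by exact_mod_cast this
    have h2 : (0:ℝ) < (r:ℝ) := by exact_mod_cast hr1
    positivity
  -- derivative of s ↦ τ s ^ (2/r) at sstar is 0
  have hrpow : HasDerivAt (fun s => τ s ^ ((2:ℝ)/r)) 0 sstar := by
    have := h0.rpow_const (p := (2:ℝ)/r) (Or.inl hpos.ne')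
    simpa using this
  have hsub : HasDerivAt (fun s => 1 - τ s ^ ((2:ℝ)/r)) 0 sstar := by
    exact ((hasDerivAt_const sstar (1:ℝ)).sub hrpow :
      HasDerivAt (fun s => 1 - τ s ^ ((2:ℝ)/r)) (0 - 0) sstar).congr_deriv (by simp)
  have hsqrt : HasDerivAt (fun s => Real.sqrt (1 - τ s ^ ((2:ℝ)/r))) 0 sstar := by
    simpa using hsub.sqrt hapos.ne'
  have hpow : HasDerivAt (fun s : ℝ => s ^ (r-1)) ((r-1 : ℕ) * sstar ^ (r-1-1)) sstar :=
    hasDerivAt_pow (r-1) sstar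
  have hmul : HasDerivAt (fun s => C * Real.sqrt (1 - τ s ^ ((2:ℝ)/r)) * s ^ (r-1))
      (C * Real.sqrt (1 - y ^ ((2:ℝ)/r)) * ((r-1 : ℕ) * sstar ^ (r-1-1))) sstar := by
    have := ((hsqrt.const_mul C).mul hpow : HasDerivAt
      (fun s => C * Real.sqrt (1 - τ s ^ ((2:ℝ)/r)) * s ^ (r-1))
      (C * 0 * sstar ^ (r-1) + C * Real.sqrt (1 - y ^ ((2:ℝ)/r)) * ((r-1 : ℕ) * sstar ^ (r-1-1))) sstar)
    exact this.congr_deriv (by ring)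
  have hdiv : HasDerivAt (fun s => ((n:ℝ) - r) * τ s / s)
      ((0 * sstar - ((n:ℝ) - r) * y * 1) / sstar ^ 2) sstar := by
    have := ((h0.const_mul ((n:ℝ) - r)).div (hasDerivAt_id sstar) hsne : HasDerivAt
      (fun s => ((n:ℝ) - r) * τ s / s)
      ((((n:ℝ) - r) * 0 * sstar - ((n:ℝ) - r) * y * 1) / sstar ^ 2) sstar)
    exact this.congr_deriv (by ring)
  set D := C * Real.sqrt (1 - y ^ ((2:ℝ)/r)) * ((r-1 : ℕ) * sstar ^ (r-1-1))
      - (0 * sstar - ((n:ℝ) - r) * y * 1) / sstar ^ 2 with hD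
  have hg : HasDerivAt (fun s => F s (τ s)) D sstar := by
    have : (fun s => F s (τ s)) = fun s =>
        C * Real.sqrt (1 - τ s ^ ((2:ℝ)/r)) * s ^ (r-1) - ((n:ℝ) - r) * τ s / s := by
      funext s; rw [hF]
    rw [this]
    exact hmul.sub hdiv
  -- deriv τ agrees with F s (τ s) near sstar
  have heq : deriv τ =ᶠ[nhds sstar] fun s => F s (τ s) := by
    filter_upwards [Ioi_mem_nhds hstar] with s hs
    exact (hode s (mem_Ici.mpr (le_of_lt hs))).deriv
  have : deriv (deriv τ) sstar = D := by
    rw [heq.deriv_eq, hg.deriv]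
  rw [this, hD]
  have hnr : (0:ℝ) < (n:ℝ) - r := by
    have : (r:ℝ) < n := by exact_mod_cast hr2
    linarith
  have h1 : 0 ≤ C * Real.sqrt (1 - y ^ ((2:ℝ)/r)) * ((r-1 : ℕ) * sstar ^ (r-1-1)) := by
    positivity
  have h2 : 0 < ((n:ℝ) - r) * y / sstar ^ 2 := by positivity
  have : (0 * sstar - ((n:ℝ) - r) * y * 1) / sstar ^ 2 = -(((n:ℝ) - r) * y / sstar ^ 2) := by
    ring
  rw [this]
  linarith
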